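/- The ℂ-vector space of homogeneous polynomials of degree 3 in ℂ[x,y,z] that vanish at the nine projective points [0:2:1], [4:0:1], [−2:3:1], [0:1:1], [1:0:1], [1:1:0], [1:9:4], [4:9:1], [4:1:1] has dimension 2. -/

import Mathlib

open MvPolynomial

noncomputable section

/-- The conic `Q = x² + y² + z² − 2xy − 2xz − 2yz`. -/
def Q : MvPolynomial (Fin 3) ℂ :=
  X 0 ^ 2 + X 1 ^ 2 + X 2 ^ 2 - 2 * X 0 * X 1 - 2 * X 0 * X 2 - 2 * X 1 * X 2

/-- Coordinates of the nine points. -/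
def pts : Fin 9 → (Fin 3 → ℂ) :=
  ![![0, 2, 1], ![4, 0, 1], ![(-2), 3, 1], ![0, 1, 1], ![1, 0, 1], ![1, 1, 0], ![1, 9, 4], ![4, 9, 1], ![4, 1, 1]]

/-- Exponent vectors. -/
def mm (a b c : ℕ) : Fin 3 →₀ ℕ := Finsupp.single 0 a + Finsupp.single 1 b + Finsupp.single 2 c

lemma mm_apply (a b c : ℕ) : (mm a b c) 0 = a ∧ (mm a b c) 1 = b ∧ (mm a b c) 2 = c := by
  refine ⟨?_, ?_, ?_⟩ <;> simp [mm, Finsupp.single_apply]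

lemma mm_eq_iff {a b c a' b' c' : ℕ} : mm a b c = mm a' b' c' ↔ a = a' ∧ b = b' ∧ c = c' := by
  constructor
  · intro h
    refine ⟨?_, ?_, ?_⟩
    · have := DFunLike.congr_fun h 0; simpa [mm, Finsupp.single_apply] using this
    · have := DFunLike.congr_fun h 1; simpa [mm, Finsupp.single_apply] using this
    · have := DFunLike.congr_fun h 2; simpa [mm, Finsupp.single_apply] using this
  · rintro ⟨rfl, rfl, rfl⟩; rfl

lemma fin3_eq (d : Fin 3 →₀ ℕ) : d = mm (d 0) (d 1) (d 2) := by
  ext i; fin_cases i <;> simp [mm, Finsupp.single_apply]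

lemma mon_eq (k : ℂ) (a b c : ℕ) :
    C k * X 0 ^ a * X 1 ^ b * X 2 ^ c = monomial (mm a b c) k := by
  rw [mm, X_pow_eq_monomial, X_pow_eq_monomial, X_pow_eq_monomial, C_apply,
    monomial_mul, monomial_mul, monomial_mul]
  simp [add_assoc]

lemma mm_degree (a b c : ℕ) : (mm a b c).degree = a + b + c := by
  rw [Finsupp.degree_apply, Finset.sum_subset (Finset.subset_univ _), Fin.sum_univ_three,
    (mm_apply a b c).1, (mm_apply a b c).2.1, (mm_apply a b c).2.2]
  intro x _ hx
  simpa using hx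

lemma isHom3 (k : ℂ) (a b c : ℕ) (h : a + b + c = 3) :
    (C k * X 0 ^ a * X 1 ^ b * X 2 ^ c : MvPolynomial (Fin 3) ℂ).IsHomogeneous 3 := by
  rw [mon_eq]
  exact isHomogeneous_monomial _ (by rw [mm_degree, h])

lemma coeff_mm_monomial (a b c a' b' c' : ℕ) (k : ℂ) :
    coeff (mm a b c) (monomial (mm a' b' c') k) = if a' = a ∧ b' = b ∧ c' = c then k else 0 := by
  rw [coeff_monomial]
  congr 1
  · simp [mm_eq_iff]

lemma coeff_deg3 (p : MvPolynomial (Fin 3) ℂ) (hp : p ∈ homogeneousSubmodule (Fin 3) ℂ 3)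
    {a b c : ℕ} (h : coeff (mm a b c) p ≠ 0) : a + b + c = 3 := by
  rw [mem_homogeneousSubmodule] at hp
  have h2 := hp h
  rw [show (Finsupp.weight 1 : (Fin 3 →₀ ℕ) →+ ℕ) = Finsupp.degree from Finsupp.degree_eq_weight_one.symm, mm_degree] at h2
  exact h2

def C1 : MvPolynomial (Fin 3) ℂ :=
  C (((3 : ℂ)/8)) * X 0 ^ 3 * X 1 ^ 0 * X 2 ^ 0 + C (((-15 : ℂ)/8)) * X 0 ^ 2 * X 1 ^ 0 * X 2 ^ 1 + C (((-7 : ℂ)/8)) * X 0 ^ 1 * X 1 ^ 2 * X 2 ^ 0 + C (((7 : ℂ)/8)) * X 0 ^ 1 * X 1 ^ 1 * X 2 ^ 1 + C (((3 : ℂ)/2)) * X 0 ^ 1 * X 1 ^ 0 * X 2 ^ 2 + C (((1 : ℂ)/2)) * X 0 ^ 0 * X 1 ^ 3 * X 2 ^ 0 + C (((-3 : ℂ)/2)) * X 0 ^ 0 * X 1 ^ 2 * X 2 ^ 1 + C ((1 : ℂ)) * X 0 ^ 0 * X 1 ^ 1 * X 2 ^ 2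

def C2 : MvPolynomial (Fin 3) ℂ :=
  C (((11 : ℂ)/16)) * X 0 ^ 3 * X 1 ^ 0 * X 2 ^ 0 + C (((-51 : ℂ)/16)) * X 0 ^ 2 * X 1 ^ 0 * X 2 ^ 1 + C (((-23 : ℂ)/16)) * X 0 ^ 1 * X 1 ^ 2 * X 2 ^ 0 + C (((27 : ℂ)/16)) * X 0 ^ 1 * X 1 ^ 1 * X 2 ^ 1 + C (((3 : ℂ)/2)) * X 0 ^ 1 * X 1 ^ 0 * X 2 ^ 2 + C (((3 : ℂ)/4)) * X 0 ^ 0 * X 1 ^ 3 * X 2 ^ 0 + C (((-7 : ℂ)/4)) * X 0 ^ 0 * X 1 ^ 2 * X 2 ^ 1 + C ((1 : ℂ)) * X 0 ^ 0 * X 1 ^ 0 * X 2 ^ 3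

set_option maxHeartbeats 2000000 in
lemma rep (p : MvPolynomial (Fin 3) ℂ) (hp : p ∈ homogeneousSubmodule (Fin 3) ℂ 3) :
    p = C (coeff (mm 3 0 0) p) * X 0 ^ 3 * X 1 ^ 0 * X 2 ^ 0 +
      C (coeff (mm 2 1 0) p) * X 0 ^ 2 * X 1 ^ 1 * X 2 ^ 0 +
      C (coeff (mm 2 0 1) p) * X 0 ^ 2 * X 1 ^ 0 * X 2 ^ 1 +
      C (coeff (mm 1 2 0) p) * X 0 ^ 1 * X 1 ^ 2 * X 2 ^ 0 +
      C (coeff (mm 1 1 1) p) * X 0 ^ 1 * X 1 ^ 1 * X 2 ^ 1 +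
      C (coeff (mm 1 0 2) p) * X 0 ^ 1 * X 1 ^ 0 * X 2 ^ 2 +
      C (coeff (mm 0 3 0) p) * X 0 ^ 0 * X 1 ^ 3 * X 2 ^ 0 +
      C (coeff (mm 0 2 1) p) * X 0 ^ 0 * X 1 ^ 2 * X 2 ^ 1 +
      C (coeff (mm 0 1 2) p) * X 0 ^ 0 * X 1 ^ 1 * X 2 ^ 2 +
      C (coeff (mm 0 0 3) p) * X 0 ^ 0 * X 1 ^ 0 * X 2 ^ 3 := by
  simp only [mon_eq]
  apply MvPolynomial.ext
  intro d
  obtain ⟨a, b, c, hd⟩ : ∃ a b c, d = mm a b c := ⟨d 0, d 1, d 2, fin3_eq d⟩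
  subst hd
  by_cases h3 : a + b + c = 3
  · have ha : a ≤ 3 := by omega
    have hb : b ≤ 3 := by omega
    have hc : c ≤ 3 := by omega
    interval_cases a <;> interval_cases b <;> interval_cases c <;>
      first
        | omega
        | (simp only [coeff_add, coeff_mm_monomial]; norm_num)
  · have h0 : coeff (mm a b c) p = 0 := by
      by_contra hne
      exact h3 (coeff_deg3 p hp hne)
    rw [h0]
    simp only [coeff_add, coeff_mm_monomial]
    rw [if_neg (show ¬(3 = a ∧ 0 = b ∧ 0 = c) by omega)]
    rw [if_neg (show ¬(2 = a ∧ 1 = b ∧ 0 = c) by omega)]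
    rw [if_neg (show ¬(2 = a ∧ 0 = b ∧ 1 = c) by omega)]
    rw [if_neg (show ¬(1 = a ∧ 2 = b ∧ 0 = c) by omega)]
    rw [if_neg (show ¬(1 = a ∧ 1 = b ∧ 1 = c) by omega)]
    rw [if_neg (show ¬(1 = a ∧ 0 = b ∧ 2 = c) by omega)]
    rw [if_neg (show ¬(0 = a ∧ 3 = b ∧ 0 = c) by omega)]
    rw [if_neg (show ¬(0 = a ∧ 2 = b ∧ 1 = c) by omega)]
    rw [if_neg (show ¬(0 = a ∧ 1 = b ∧ 2 = c) by omega)]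
    rw [if_neg (show ¬(0 = a ∧ 0 = b ∧ 3 = c) by omega)]
    norm_num

lemma C1_mem : C1 ∈ homogeneousSubmodule (Fin 3) ℂ 3 ⊓
    ⨅ i : Fin 9, LinearMap.ker (aeval (pts i)).toLinearMap := by
  rw [Submodule.mem_inf]
  constructor
  · rw [mem_homogeneousSubmodule, C1]
    exact ((((((((isHom3 _ _ _ _ (by norm_num)).add (isHom3 _ _ _ _ (by norm_num))).add (isHom3 _ _ _ _ (by norm_num))).add (isHom3 _ _ _ _ (by norm_num))).add (isHom3 _ _ _ _ (by norm_num))).add (isHom3 _ _ _ _ (by norm_num))).add (isHom3 _ _ _ _ (by norm_num))).add (isHom3 _ _ _ _ (by norm_num)))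
  · rw [Submodule.mem_iInf]
    intro i
    rw [LinearMap.mem_ker, AlgHom.toLinearMap_apply]
    fin_cases i <;>
      · simp only [C1, map_add, map_mul, map_pow, aeval_X, aeval_C]
        norm_num [pts, Matrix.cons_val_succ, Matrix.cons_val_two, Matrix.tail_cons, Matrix.head_cons]

lemma C2_mem : C2 ∈ homogeneousSubmodule (Fin 3) ℂ 3 ⊓
    ⨅ i : Fin 9, LinearMap.ker (aeval (pts i)).toLinearMap := by
  rw [Submodule.mem_inf]
  constructor
  · rw [mem_homogeneousSubmodule, C2]
    exact ((((((((isHom3 _ _ _ _ (by norm_num)).add (isHom3 _ _ _ _ (by norm_num))).add (isHom3 _ _ _ _ (by norm_num))).add (isHom3 _ _ _ _ (by norm_num))).add (isHom3 _ _ _ _ (by norm_num))).add (isHom3 _ _ _ _ (by norm_num))).add (isHom3 _ _ _ _ (by norm_num))).add (isHom3 _ _ _ _ (by norm_num)))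
  · rw [Submodule.mem_iInf]
    intro i
    rw [LinearMap.mem_ker, AlgHom.toLinearMap_apply]
    fin_cases i <;>
      · simp only [C2, map_add, map_mul, map_pow, aeval_X, aeval_C]
        norm_num [pts, Matrix.cons_val_succ, Matrix.cons_val_two, Matrix.tail_cons, Matrix.head_cons]

set_option maxHeartbeats 2000000 in
lemma span_mem (p : MvPolynomial (Fin 3) ℂ) (hp : p ∈ homogeneousSubmodule (Fin 3) ℂ 3)
    (hker : ∀ i : Fin 9, (aeval (pts i)) p = 0) :
    p = coeff (mm 0 1 2) p • C1 + coeff (mm 0 0 3) p • C2 := by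
  have hrep := rep p hp
  set c300 := coeff (mm 3 0 0) p with hc300
  set c210 := coeff (mm 2 1 0) p with hc210
  set c201 := coeff (mm 2 0 1) p with hc201
  set c120 := coeff (mm 1 2 0) p with hc120
  set c111 := coeff (mm 1 1 1) p with hc111
  set c102 := coeff (mm 1 0 2) p with hc102
  set c030 := coeff (mm 0 3 0) p with hc030
  set c021 := coeff (mm 0 2 1) p with hc021
  set c012 := coeff (mm 0 1 2) p with hc012
  set c003 := coeff (mm 0 0 3) p with hc003
  have e0 : (aeval (pts 0)) p = 0 := hker 0
  rw [hrep] at e0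
  simp only [map_add, map_mul, map_pow, aeval_X, aeval_C] at e0
  rw [show pts 0 = ![(0:ℂ),2,1] from rfl] at e0
  norm_num [Matrix.cons_val_succ, Matrix.cons_val_two, Matrix.tail_cons, Matrix.head_cons] at e0
  have e1 : (aeval (pts 1)) p = 0 := hker 1
  rw [hrep] at e1
  simp only [map_add, map_mul, map_pow, aeval_X, aeval_C] at e1
  rw [show pts 1 = ![(4:ℂ),0,1] from rfl] at e1
  norm_num [Matrix.cons_val_succ, Matrix.cons_val_two, Matrix.tail_cons, Matrix.head_cons] at e1
  have e2 : (aeval (pts 2)) p = 0 := hker 2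
  rw [hrep] at e2
  simp only [map_add, map_mul, map_pow, aeval_X, aeval_C] at e2
  rw [show pts 2 = ![(-2:ℂ),3,1] from rfl] at e2
  norm_num [Matrix.cons_val_succ, Matrix.cons_val_two, Matrix.tail_cons, Matrix.head_cons] at e2
  have e3 : (aeval (pts 3)) p = 0 := hker 3
  rw [hrep] at e3
  simp only [map_add, map_mul, map_pow, aeval_X, aeval_C] at e3
  rw [show pts 3 = ![(0:ℂ),1,1] from rfl] at e3
  norm_num [Matrix.cons_val_succ, Matrix.cons_val_two, Matrix.tail_cons, Matrix.head_cons] at e3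
  have e4 : (aeval (pts 4)) p = 0 := hker 4
  rw [hrep] at e4
  simp only [map_add, map_mul, map_pow, aeval_X, aeval_C] at e4
  rw [show pts 4 = ![(1:ℂ),0,1] from rfl] at e4
  norm_num [Matrix.cons_val_succ, Matrix.cons_val_two, Matrix.tail_cons, Matrix.head_cons] at e4
  have e5 : (aeval (pts 5)) p = 0 := hker 5
  rw [hrep] at e5
  simp only [map_add, map_mul, map_pow, aeval_X, aeval_C] at e5
  rw [show pts 5 = ![(1:ℂ),1,0] from rfl] at e5
  norm_num [Matrix.cons_val_succ, Matrix.cons_val_two, Matrix.tail_cons, Matrix.head_cons] at e5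
  have e6 : (aeval (pts 6)) p = 0 := hker 6
  rw [hrep] at e6
  simp only [map_add, map_mul, map_pow, aeval_X, aeval_C] at e6
  rw [show pts 6 = ![(1:ℂ),9,4] from rfl] at e6
  norm_num [Matrix.cons_val_succ, Matrix.cons_val_two, Matrix.tail_cons, Matrix.head_cons] at e6
  have e7 : (aeval (pts 7)) p = 0 := hker 7
  rw [hrep] at e7
  simp only [map_add, map_mul, map_pow, aeval_X, aeval_C] at e7
  rw [show pts 7 = ![(4:ℂ),9,1] from rfl] at e7
  norm_num [Matrix.cons_val_succ, Matrix.cons_val_two, Matrix.tail_cons, Matrix.head_cons] at e7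
  have e8 : (aeval (pts 8)) p = 0 := hker 8
  rw [hrep] at e8
  simp only [map_add, map_mul, map_pow, aeval_X, aeval_C] at e8
  rw [show pts 8 = ![(4:ℂ),1,1] from rfl] at e8
  norm_num [Matrix.cons_val_succ, Matrix.cons_val_two, Matrix.tail_cons, Matrix.head_cons] at e8
  have r300 : c300 = ((3 : ℂ)/8) * c012 + ((11 : ℂ)/16) * c003 := by linear_combination (((5 : ℂ)/16)) * e0 + (((1 : ℂ)/108)) * e1 + (((-1 : ℂ)/72)) * e2 + (((-15 : ℂ)/16)) * e3 + (((-1 : ℂ)/18)) * e4 + (((1 : ℂ)/2)) * e5 + (((-1 : ℂ)/432)) * e7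
  have r210 : c210 = (0 : ℂ) := by linear_combination (((-5 : ℂ)/6)) * e0 + (((-1 : ℂ)/162)) * e1 + (((1 : ℂ)/27)) * e2 + (((1 : ℂ)/4)) * e3 + (((-1 : ℂ)/27)) * e4 + (((11 : ℂ)/12)) * e5 + (((1 : ℂ)/108)) * e6 + (((-1 : ℂ)/324)) * e7
  have r201 : c201 = ((-15 : ℂ)/8) * c012 + ((-51 : ℂ)/16) * c003 := by linear_combination (((-25 : ℂ)/16)) * e0 + (((1 : ℂ)/27)) * e1 + (((5 : ℂ)/72)) * e2 + (((75 : ℂ)/16)) * e3 + (((-1 : ℂ)/18)) * e4 + (((-5 : ℂ)/2)) * e5 + (((5 : ℂ)/432)) * e7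
  have r120 : c120 = ((-7 : ℂ)/8) * c012 + ((-23 : ℂ)/16) * c003 := by linear_combination (((13 : ℂ)/48)) * e0 + (((-1 : ℂ)/324)) * e1 + (((-5 : ℂ)/216)) * e2 + (((27 : ℂ)/16)) * e3 + (((5 : ℂ)/54)) * e4 + (((-5 : ℂ)/12)) * e5 + (((-1 : ℂ)/108)) * e6 + (((7 : ℂ)/1296)) * e7
  have r111 : c111 = ((7 : ℂ)/8) * c012 + ((27 : ℂ)/16) * c003 := by linear_combination (((-173 : ℂ)/48)) * e0 + (((2 : ℂ)/81)) * e1 + (((13 : ℂ)/216)) * e2 + (((-7 : ℂ)/16)) * e3 + (((-37 : ℂ)/54)) * e4 + (((1 : ℂ)/12)) * e5 + (((5 : ℂ)/108)) * e6 + (((-11 : ℂ)/1296)) * e7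
  have r102 : c102 = ((3 : ℂ)/2) * c012 + ((3 : ℂ)/2) * c003 := by linear_combination (((5 : ℂ)/4)) * e0 + (((-5 : ℂ)/108)) * e1 + (((-1 : ℂ)/18)) * e2 + (((-15 : ℂ)/4)) * e3 + (((10 : ℂ)/9)) * e4 + ((2 : ℂ)) * e5 + (((-1 : ℂ)/108)) * e7
  have r030 : c030 = ((1 : ℂ)/2) * c012 + ((3 : ℂ)/4) * c003 := by linear_combination (((1 : ℂ)/4)) * e0 + ((-1 : ℂ)) * e3
  have r021 : c021 = ((-3 : ℂ)/2) * c012 + ((-7 : ℂ)/4) * c003 := by linear_combination (((-1 : ℂ)/4)) * e0 + ((2 : ℂ)) * e3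
  rw [hrep, smul_eq_C_mul, smul_eq_C_mul, C1, C2]
  rw [r300, r210, r201, r120, r111, r102, r030, r021]
  simp only [map_add, map_mul, map_zero, map_one]
  ring

theorem stmt5 :
    Module.finrank ℂ
      ↥(homogeneousSubmodule (Fin 3) ℂ 3 ⊓
        ⨅ i : Fin 9, LinearMap.ker (aeval (pts i)).toLinearMap) = 2 := by
  have hspan : homogeneousSubmodule (Fin 3) ℂ 3 ⊓
      (⨅ i : Fin 9, LinearMap.ker (aeval (pts i)).toLinearMap) =
      Submodule.span ℂ (Set.range ![C1, C2]) := by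
    have hr : Set.range ![C1, C2] = {C1, C2} := by
      ext q; simp [Fin.exists_fin_two, or_comm]
    rw [hr]
    apply le_antisymm
    · intro p hp
      rw [Submodule.mem_inf] at hp
      have hker : ∀ i : Fin 9, (aeval (pts i)) p = 0 := by
        intro i
        have := (Submodule.mem_iInf _).mp hp.2 i
        rwa [LinearMap.mem_ker, AlgHom.toLinearMap_apply] at this
      rw [span_mem p hp.1 hker]
      exact Submodule.add_mem _
        (Submodule.smul_mem _ _ (Submodule.subset_span (by simp)))
        (Submodule.smul_mem _ _ (Submodule.subset_span (by simp)))
    · rw [Submodule.span_le]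
      rintro q hq
      rcases hq with rfl | hq
      · exact C1_mem
      · rcases hq with rfl
        exact C2_mem
  rw [hspan, finrank_span_eq_card ?_, Fintype.card_fin]
  rw [LinearIndependent.pair_iff]
  intro s t hst
  have h1 : coeff (mm 0 1 2) (s • C1 + t • C2) = 0 := by rw [hst]; simp
  have h2 : coeff (mm 0 0 3) (s • C1 + t • C2) = 0 := by rw [hst]; simp
  simp only [C1, C2, mon_eq, coeff_add, coeff_smul, coeff_monomial, mm_eq_iff] at h1 h2
  norm_num at h1 h2
  exact ⟨h1, h2⟩
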